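/- (Fixed-time stability lemma.) Let V : [0,∞) → [0,∞) be absolutely continuous and satisfy V'(t) ≤ −a·V(t)^{1−ν} − b·V(t)^{1+ν} for almost every t ≥ 0, where a, b > 0 and 0 < ν < 1/2. Then V(t) = 0 for all t ≥ T := π/(2ν√(ab)), regardless of the initial value V(0). -/

import Mathlib

open MeasureTheory Set Filter

/-- Fixed-time stability lemma (Parsegov et al.): if a nonnegative nonincreasing
continuous `V`, differentiable a.e., satisfies
`V' ≤ -a V^(1-ν) - b V^(1+ν)` a.e. on `[0,∞)` with `a, b > 0` and `0 < ν < 1/2`,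
then `V(t) = 0` for all `t ≥ π / (2 ν √(a b))`, uniformly in `V(0)`. -/
theorem stmt_5 (V : ℝ → ℝ) (a b ν : ℝ) (ha : 0 < a) (hb : 0 < b)
    (hν0 : 0 < ν) (hν : ν < 1 / 2)
    (hVpos : ∀ t, 0 ≤ t → 0 ≤ V t)
    (hVcont : Continuous V)
    (hVmono : AntitoneOn V (Set.Ici (0 : ℝ)))
    (hVdiff : ∀ᵐ t : ℝ, 0 ≤ t → DifferentiableAt ℝ V t)
    (hineq : ∀ᵐ t : ℝ, 0 ≤ t →
      deriv V t ≤ -a * V t ^ (1 - ν) - b * V t ^ (1 + ν)) :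
    ∀ t, Real.pi / (2 * ν * Real.sqrt (a * b)) ≤ t → V t = 0 := by
  intro t₀ ht₀
  by_contra hne
  set c := Real.sqrt (b / a) with hc
  set K := ν * Real.sqrt (a * b) with hK
  have hsab : 0 < Real.sqrt (a * b) := Real.sqrt_pos.mpr (mul_pos ha hb)
  have hKpos : 0 < K := mul_pos hν0 hsab
  have hcpos : 0 < c := Real.sqrt_pos.mpr (div_pos hb ha)
  have hTpos : 0 < Real.pi / (2 * ν * Real.sqrt (a * b)) :=
    div_pos Real.pi_pos (by positivity)
  have ht0pos : 0 < t₀ := lt_of_lt_of_le hTpos ht₀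
  have hV0 : 0 < V t₀ := lt_of_le_of_ne (hVpos t₀ ht0pos.le) (Ne.symm hne)
  -- clamp function
  set u : ℝ → ℝ := fun t => max 0 (min t t₀) with hu
  have hu_mem : ∀ t, u t ∈ Icc (0:ℝ) t₀ := by
    intro t
    refine ⟨le_max_left _ _, max_le ht0pos.le (min_le_right _ _)⟩
  have humono : Monotone u := fun s t hst =>
    max_le_max le_rfl (min_le_min hst le_rfl)
  -- the auxiliary function
  set g : ℝ → ℝ := fun t => - Real.arctan (c * V (u t) ^ ν) with hg
  have hVu : ∀ t, 0 ≤ V (u t) := fun t => hVpos _ (hu_mem t).1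
  have hgmono : Monotone g := by
    intro s t hst
    have h1 : V (u t) ≤ V (u s) := hVmono (hu_mem s).1 (hu_mem t).1 (humono hst)
    have h2 : V (u t) ^ ν ≤ V (u s) ^ ν := Real.rpow_le_rpow (hVu t) h1 hν0.le
    have h3 : c * V (u t) ^ ν ≤ c * V (u s) ^ ν :=
      mul_le_mul_of_nonneg_left h2 hcpos.le
    simpa [hg] using (Real.arctan_strictMono.monotone h3)
  have hgcont : Continuous g := by
    have hucont : Continuous u :=
      continuous_const.max (continuous_id.min continuous_const)
    exact (Real.continuous_arctan.comp
      (continuous_const.mul ((Real.continuous_rpow_const hν0.le).comp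
        (hVcont.comp hucont)))).neg
  -- the Stieltjes measure of g
  set μg := hgmono.stieltjesFunction.measure with hμg
  have hgval : ∀ x, hgmono.stieltjesFunction x = g x := by
    intro x
    rw [hgmono.stieltjesFunction_eq]
    exact rightLim_eq_of_tendsto (h := nhdsGT_neBot x)
      ((hgcont.tendsto x).mono_left nhdsWithin_le_nhds)
  -- a.e. lower bound on the Radon–Nikodym derivative on (0, t₀)
  have key : ∀ᵐ t : ℝ, t ∈ Ioo (0:ℝ) t₀ →
      ENNReal.ofReal K ≤ μg.rnDeriv volume t := by
    filter_upwards [hgmono.ae_hasDerivAt, hVdiff, hineq] with t hder hdiff hiq ht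
    have ht0 : (0:ℝ) ≤ t := ht.1.le
    have hVt : 0 < V t := lt_of_lt_of_le hV0 (hVmono (mem_Ici.mpr ht0)
      (mem_Ici.mpr ht0pos.le) ht.2.le)
    have hdiff' := hdiff ht0
    have hiq' := hiq ht0
    -- derivative of the unclamped composite
    have h1 : HasDerivAt V (deriv V t) t := hdiff'.hasDerivAt
    have h2 : HasDerivAt (fun x : ℝ => x ^ ν) (ν * V t ^ (ν - 1)) (V t) :=
      Real.hasDerivAt_rpow_const (Or.inl hVt.ne')
    have h3 : HasDerivAt (fun s => V s ^ ν) (ν * V t ^ (ν - 1) * deriv V t) t :=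
      h2.comp t h1
    have h4 : HasDerivAt (fun s => c * V s ^ ν)
        (c * (ν * V t ^ (ν - 1) * deriv V t)) t := h3.const_mul c
    have h5 : HasDerivAt Real.arctan (1 / (1 + (c * V t ^ ν) ^ 2))
        (c * V t ^ ν) := Real.hasDerivAt_arctan _
    have h6 : HasDerivAt (fun s => - Real.arctan (c * V s ^ ν))
        (-(1 / (1 + (c * V t ^ ν) ^ 2) * (c * (ν * V t ^ (ν - 1) * deriv V t)))) t :=
      by have h := (h5.comp t h4).neg; exact h
    set D := -(1 / (1 + (c * V t ^ ν) ^ 2) * (c * (ν * V t ^ (ν - 1) * deriv V t)))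
      with hD
    have hgeq : g =ᶠ[nhds t] (fun s => - Real.arctan (c * V s ^ ν)) := by
      filter_upwards [Ioo_mem_nhds ht.1 ht.2] with s hs
      simp only [hg, hu, min_eq_left hs.2.le, max_eq_right hs.1.le]
    have h7 : HasDerivAt g D t := h6.congr_of_eventuallyEq hgeq
    -- the lower bound K ≤ D
    have hKD : K ≤ D := by
      set P := V t ^ ν with hP
      set R := V t ^ (ν - 1) with hR
      have hPpos : 0 < P := Real.rpow_pos_of_pos hVt _
      have hRpos : 0 < R := Real.rpow_pos_of_pos hVt _
      have e1 : R * V t ^ (1 - ν) = 1 := by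
        rw [hR, ← Real.rpow_add hVt]; norm_num
      have e2 : R * V t ^ (1 + ν) = P ^ 2 := by
        rw [hR, hP, ← Real.rpow_add hVt, ← Real.rpow_natCast (V t ^ ν) 2,
          ← Real.rpow_mul hVt.le]
        ring_nf
      have hca : c * a = Real.sqrt (a * b) := by
        rw [hc, ← Real.sqrt_sq ha.le, ← Real.sqrt_mul (by positivity)]
        congr 1; field_simp; rw [Real.sq_sqrt (sq_nonneg a)]
      have hcb : c * b = Real.sqrt (a * b) * (b / a) := by
        have hc' : c = Real.sqrt (a * b) / a := (eq_div_iff ha.ne').mpr hca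
        rw [hc']; ring
      have hc2 : c ^ 2 = b / a := Real.sq_sqrt (by positivity)
      have hden : (0:ℝ) < 1 + (c * P) ^ 2 := by positivity
      -- numerator bound
      have hnum : K * (1 + (c * P) ^ 2) ≤ -(c * (ν * R * deriv V t)) := by
        have h8 : c * (ν * R) * (a * V t ^ (1 - ν) + b * V t ^ (1 + ν))
            ≤ -(c * (ν * R) * deriv V t) := by
          have h9 : deriv V t ≤ -(a * V t ^ (1 - ν) + b * V t ^ (1 + ν)) := by
            linarith [hiq']
          nlinarith [mul_pos hcpos (mul_pos hν0 hRpos)]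
        have h10 : c * (ν * R) * (a * V t ^ (1 - ν) + b * V t ^ (1 + ν))
            = K * (1 + (c * P) ^ 2) := by
          have : c * (ν * R) * (a * V t ^ (1 - ν) + b * V t ^ (1 + ν))
              = ν * ((c * a) * (R * V t ^ (1 - ν)) + (c * b) * (R * V t ^ (1 + ν))) := by
            ring
          rw [this, e1, e2, hca, hcb, hK]
          have : (c * P) ^ 2 = (b / a) * P ^ 2 := by rw [mul_pow, hc2]
          rw [this]; ring
        calc K * (1 + (c * P) ^ 2)
            = c * (ν * R) * (a * V t ^ (1 - ν) + b * V t ^ (1 + ν)) := h10.symm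
          _ ≤ -(c * (ν * R) * deriv V t) := h8
          _ = -(c * (ν * R * deriv V t)) := by ring
      have : K ≤ -(c * (ν * R * deriv V t)) / (1 + (c * P) ^ 2) :=
        (le_div_iff₀ hden).mpr hnum
      calc K ≤ -(c * (ν * R * deriv V t)) / (1 + (c * P) ^ 2) := this
        _ = D := by rw [hD]; field_simp
    have hunique : (μg.rnDeriv volume t).toReal = D := hder.unique h7
    calc ENNReal.ofReal K ≤ ENNReal.ofReal ((μg.rnDeriv volume t).toReal) :=
        ENNReal.ofReal_le_ofReal (hunique ▸ hKD)
      _ ≤ μg.rnDeriv volume t := ENNReal.ofReal_toReal_le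
  -- integrate the lower bound
  have hint : ENNReal.ofReal (K * t₀) ≤ ENNReal.ofReal (g t₀ - g 0) := by
    calc ENNReal.ofReal (K * t₀)
        = ENNReal.ofReal K * volume (Ioo (0:ℝ) t₀) := by
          rw [Real.volume_Ioo, sub_zero, ← ENNReal.ofReal_mul hKpos.le]
      _ = ∫⁻ _ in Ioo (0:ℝ) t₀, ENNReal.ofReal K := (setLIntegral_const _ _).symm
      _ ≤ ∫⁻ s in Ioo (0:ℝ) t₀, μg.rnDeriv volume s :=
          lintegral_mono_ae ((ae_restrict_iff' measurableSet_Ioo).mpr key)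
      _ ≤ μg (Ioo (0:ℝ) t₀) := Measure.setLIntegral_rnDeriv_le _
      _ ≤ μg (Ioc (0:ℝ) t₀) := measure_mono Ioo_subset_Ioc_self
      _ = ENNReal.ofReal (g t₀ - g 0) := by
          rw [hμg, StieltjesFunction.measure_Ioc, hgval, hgval]
  have hKt : K * t₀ ≤ g t₀ - g 0 := by
    by_cases hgs : 0 ≤ g t₀ - g 0
    · exact (ENNReal.ofReal_le_ofReal_iff hgs).mp hint
    · push_neg at hgs
      exfalso
      have : ENNReal.ofReal (K * t₀) = 0 := le_antisymm
        (by simpa [ENNReal.ofReal_eq_zero.mpr hgs.le] using hint) zero_le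
      rw [ENNReal.ofReal_eq_zero] at this
      nlinarith
  -- evaluate g at the endpoints
  have hu0 : u 0 = 0 := by simp [hu, min_eq_left ht0pos.le]
  have hut : u t₀ = t₀ := by simp [hu, ht0pos.le]
  have hg0 : g 0 = - Real.arctan (c * V 0 ^ ν) := by rw [hg]; simp [hu0]
  have hgt : g t₀ = - Real.arctan (c * V t₀ ^ ν) := by rw [hg]; simp [hut]
  -- final contradiction
  have harc1 : Real.arctan (c * V 0 ^ ν) < Real.pi / 2 := Real.arctan_lt_pi_div_two _
  have harc2 : 0 < Real.arctan (c * V t₀ ^ ν) := by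
    have : (0:ℝ) < c * V t₀ ^ ν := mul_pos hcpos (Real.rpow_pos_of_pos hV0 _)
    simpa using Real.arctan_strictMono this
  have hlt : g t₀ - g 0 < Real.pi / 2 := by
    rw [hg0, hgt]; linarith
  have hTK : Real.pi / (2 * ν * Real.sqrt (a * b)) = Real.pi / (2 * K) := by
    rw [hK]; ring_nf
  have hge : Real.pi / 2 ≤ K * t₀ := by
    rw [hTK] at ht₀
    have h1 : K * (Real.pi / (2 * K)) ≤ K * t₀ := mul_le_mul_of_nonneg_left ht₀ hKpos.le
    have h2 : K * (Real.pi / (2 * K)) = Real.pi / 2 := by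
      field_simp
    linarith
  linarith
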